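/- Let (y_j)_{j≥1} be a sequence of complex numbers with |y₁| ≥ |y₂| ≥ |y₃| ≥ ⋯, with y₁ ≠ 0, and such that K := Σ_{j≥1} |y_j|/|y₁| converges. Then there exists an integer k with 1 ≤ k ≤ 24K such that Re Σ_{j≥1} y_j^k ≥ (1/8)|y₁|^k. -/

import Mathlib

open Finset Complex

set_option maxHeartbeats 2000000

/-- Fejér kernel identity on the unit circle. -/
lemma fejer_identity (z : ℂ) (hz : ‖z‖ = 1) (m : ℕ) :
    Complex.normSq (∑ a ∈ range (m+1), z^a)
      = (m+1 : ℝ) + 2 * ∑ i ∈ range m, ((m:ℝ) - i) * ((z^(i+1)).re) := by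
  have hnz : Complex.normSq z = 1 := by
    rw [Complex.normSq_eq_norm_sq, hz]; norm_num
  have hz1 : z * (starRingEnd ℂ) z = 1 := by
    rw [Complex.mul_conj, hnz]; norm_num
  induction m with
  | zero => simp
  | succ m ih =>
      have hsplit : (∑ a ∈ range (m+2), z^a) = (∑ a ∈ range (m+1), z^a) + z^(m+1) :=
        Finset.sum_range_succ _ _
      rw [hsplit, Complex.normSq_add, ih]
      have hpow : Complex.normSq (z^(m+1)) = 1 := by
        rw [Complex.normSq_eq_norm_sq, norm_pow, hz, one_pow, one_pow]
      rw [hpow]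
      have hcross : ((∑ a ∈ range (m+1), z^a) * (starRingEnd ℂ) (z^(m+1))).re
          = ∑ b ∈ range (m+1), (z^(b+1)).re := by
        rw [Finset.sum_mul, Complex.re_sum]
        have hterm : ∀ b ∈ range (m+1), (z^b * (starRingEnd ℂ) (z^(m+1))).re
            = (z^(m+1-b)).re := by
          intro b hb
          have hble : b ≤ m + 1 := by
            have := Finset.mem_range.mp hb; omega
          have h1 : (starRingEnd ℂ) (z^(m+1))
              = ((starRingEnd ℂ) z)^b * ((starRingEnd ℂ) z)^(m+1-b) := by
            rw [map_pow, ← pow_add]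
            congr 1
            omega
          have h2 : z^b * (starRingEnd ℂ) (z^(m+1)) = (starRingEnd ℂ) (z^(m+1-b)) := by
            rw [h1]
            calc z^b * (((starRingEnd ℂ) z)^b * ((starRingEnd ℂ) z)^(m+1-b))
                = (z * (starRingEnd ℂ) z)^b * ((starRingEnd ℂ) z)^(m+1-b) := by
                  rw [mul_pow]; ring
              _ = (starRingEnd ℂ) (z^(m+1-b)) := by
                  rw [hz1, one_pow, one_mul, map_pow]
          rw [h2, Complex.conj_re]
        rw [Finset.sum_congr rfl hterm]
        have hrefl := Finset.sum_range_reflect (fun j => (z^(j+1)).re) (m+1)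
        have heq : ∀ b ∈ range (m+1), (z^(m+1-b)).re = (fun j => (z^(j+1)).re) (m + 1 - 1 - b) := by
          intro b hb
          have := Finset.mem_range.mp hb
          simp only []
          congr 2
          omega
        rw [Finset.sum_congr rfl heq, hrefl]
      rw [hcross]
      have expand1 : ∑ i ∈ range (m+1), ((↑(m+1):ℝ) - i) * ((z^(i+1)).re)
          = (∑ i ∈ range (m+1), ((m:ℝ) - i) * ((z^(i+1)).re))
            + ∑ i ∈ range (m+1), (z^(i+1)).re := by
        rw [← Finset.sum_add_distrib]
        refine Finset.sum_congr rfl fun i _ => ?_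
        push_cast
        ring
      have expand2 : ∑ i ∈ range (m+1), ((m:ℝ) - i) * ((z^(i+1)).re)
          = ∑ i ∈ range m, ((m:ℝ) - i) * ((z^(i+1)).re) := by
        rw [Finset.sum_range_succ, sub_self, zero_mul, add_zero]
      rw [expand1, expand2]
      push_cast
      ring

/-- The Fejér-weighted power sum is bounded below by `-1/2` on the closed unit disk. -/
lemma phi_ge_neg_half (n : ℕ) (v : ℂ) (hv : ‖v‖ ≤ 1) :
    -(1/2 : ℝ) ≤ ∑ i ∈ range n, (1 - (i+1 : ℝ)/(n+1)) * ((v^(i+1)).re) := by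
  set F : ℂ → ℂ := fun z => ∑ i ∈ range n, ((1 - (i+1 : ℝ)/(n+1) : ℝ) : ℂ) * z^(i+1) with hF
  have hre : ∀ z : ℂ, (F z).re = ∑ i ∈ range n, (1 - (i+1 : ℝ)/(n+1)) * ((z^(i+1)).re) := by
    intro z
    rw [hF]
    simp only [Complex.re_sum, Complex.re_ofReal_mul]
  have hbdry : ∀ z : ℂ, ‖z‖ = 1 → -(1/2 : ℝ) ≤ (F z).re := by
    intro z hz
    have hid := fejer_identity z hz n
    have hpos : 0 ≤ Complex.normSq (∑ a ∈ range (n+1), z^a) := Complex.normSq_nonneg _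
    rw [hid] at hpos
    rw [hre]
    have hcoeff : ∀ i ∈ range n, (1 - (i+1 : ℝ)/(n+1)) * ((z^(i+1)).re)
        = (((n:ℝ) - i) * ((z^(i+1)).re)) / (n+1) := by
      intro i _
      have hn1 : (n:ℝ) + 1 ≠ 0 := by positivity
      field_simp
      ring
    rw [Finset.sum_congr rfl hcoeff, ← Finset.sum_div]
    have hn1 : (0:ℝ) < (n:ℝ)+1 := by positivity
    rw [le_div_iff₀ hn1]
    linarith
  have hdF : Differentiable ℂ F := by
    apply Differentiable.fun_sum
    intro i _
    exact (differentiable_pow (i+1)).const_mul _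
  have hdiff : Differentiable ℂ (fun z => Complex.exp (-(F z))) := (hdF.neg).cexp
  have hmax : ‖Complex.exp (-(F v))‖ ≤ Real.exp (1/2) := by
    apply Complex.norm_le_of_forall_mem_frontier_norm_le
      (U := Metric.ball (0:ℂ) 1) Metric.isBounded_ball hdiff.diffContOnCl
    · intro z hzf
      rw [frontier_ball (0:ℂ) one_ne_zero, mem_sphere_zero_iff_norm] at hzf
      have hz1 : ‖z‖ = 1 := by exact hzf
      rw [Complex.norm_exp]
      apply Real.exp_le_exp.mpr
      have := hbdry z hz1
      simp only [Complex.neg_re]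
      linarith
    · rw [closure_ball (0:ℂ) one_ne_zero, Metric.mem_closedBall, dist_zero_right]
      exact hv
  rw [Complex.norm_exp] at hmax
  have := Real.exp_le_exp.mp hmax
  simp only [Complex.neg_re] at this
  rw [← hre]
  linarith

/-- Geometric bound for the Fejér-weighted power sum. -/
lemma phi_abs_le_geom (n : ℕ) (v : ℂ) (hv : ‖v‖ < 1) :
    |∑ i ∈ range n, (1 - (i+1 : ℝ)/(n+1)) * ((v^(i+1)).re)|
      ≤ ‖v‖ / (1 - ‖v‖) := by
  have h1 : |∑ i ∈ range n, (1 - (i+1 : ℝ)/(n+1)) * ((v^(i+1)).re)|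
      ≤ ∑ i ∈ range n, ‖v‖ * (‖v‖)^i := by
    refine (Finset.abs_sum_le_sum_abs _ _).trans (Finset.sum_le_sum fun i hi => ?_)
    rw [abs_mul]
    have hw0 : (0:ℝ) ≤ 1 - (i+1 : ℝ)/(n+1) := by
      have hlt' : i < n := Finset.mem_range.mp hi
      have hcast : (i:ℝ) ≤ (n:ℝ) := Nat.cast_le.mpr (le_of_lt hlt')
      have hin : (i:ℝ) + 1 ≤ (n:ℝ) + 1 := by linarith
      rw [sub_nonneg, div_le_one (by positivity : (0:ℝ) < (n:ℝ)+1)]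
      exact hin
    have hw1 : |1 - (i+1 : ℝ)/(n+1)| ≤ 1 := by
      rw [_root_.abs_of_nonneg hw0]
      have : (0:ℝ) ≤ (i+1 : ℝ)/(n+1) := by positivity
      linarith
    calc |1 - (i+1 : ℝ)/(n+1)| * |(v^(i+1)).re|
        ≤ 1 * |(v^(i+1)).re| := by
          apply mul_le_mul_of_nonneg_right hw1 (abs_nonneg _)
      _ = |(v^(i+1)).re| := one_mul _
      _ ≤ ‖v^(i+1)‖ := Complex.abs_re_le_norm _
      _ = ‖v‖ * (‖v‖)^i := by
          rw [norm_pow, pow_succ]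
          ring
  refine h1.trans ?_
  rw [← Finset.mul_sum]
  rw [div_eq_mul_inv]
  apply mul_le_mul_of_nonneg_left _ (norm_nonneg v)
  calc ∑ i ∈ range n, (‖v‖)^i
      ≤ ∑' i : ℕ, (‖v‖)^i :=
        Summable.sum_le_tsum _ (fun i _ => by positivity)
          (summable_geometric_of_lt_one (norm_nonneg v) hv)
    _ = (1 - ‖v‖)⁻¹ := tsum_geometric_of_lt_one (norm_nonneg v) hv

/-- product formula for real parts. -/
lemma re_mul_re (a b : ℂ) :
    a.re * b.re = ((a*b).re + (((starRingEnd ℂ) a) * b).re)/2 := by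
  simp only [Complex.mul_re, Complex.conj_re, Complex.conj_im]
  ring

lemma sum_range_add_one_cast (n : ℕ) : (∑ i ∈ range n, ((i:ℝ)+1)) = n*(n+1)/2 := by
  induction n with
  | zero => simp
  | succ m ih =>
      rw [Finset.sum_range_succ, ih]
      push_cast
      ring

/-- **Turán's power sum theorem.**  If `(y j)_{j ≥ 0}` is a sequence of complex numbers with
nonincreasing absolute values, `y 0 ≠ 0`, and `K = Σ_j |y j| / |y 0|` converges, then there is
an integer `1 ≤ k ≤ 24 K` with `Re Σ_j (y j)^k ≥ (1/8) |y 0|^k`. -/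
theorem statement7 (y : ℕ → ℂ) (hy₀ : y 0 ≠ 0)
    (hmono : ∀ j, ‖y (j + 1)‖ ≤ ‖y j‖)
    (hsum : Summable fun j => ‖y j‖)
    (K : ℝ) (hK : K = ∑' j, ‖y j‖ / ‖y 0‖) :
    ∃ k : ℕ, 1 ≤ k ∧ (k : ℝ) ≤ 24 * K ∧
      (∑' j, (y j) ^ k).re ≥ (1 / 8) * ‖y 0‖ ^ k := by

  have hD : 0 < ‖y 0‖ := norm_pos_iff.mpr hy₀
  set D : ℝ := ‖y 0‖ with hDdef
  set u : ℕ → ℂ := fun j => y j / (D:ℂ) with hu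
  have hDne : (D:ℂ) ≠ 0 := by
    simp only [ne_eq, Complex.ofReal_eq_zero]
    exact ne_of_gt hD
  have hujabs : ∀ j, ‖u j‖ = ‖y j‖ / D := by
    intro j
    rw [hu]
    simp only [norm_div, Complex.norm_real, Real.norm_eq_abs, abs_of_pos hD]
  have hu0 : ‖u 0‖ = 1 := by
    rw [hujabs 0, ← hDdef, div_self (ne_of_gt hD)]
  have hmono0 : ∀ j, ‖y j‖ ≤ ‖y 0‖ := by
    intro j
    induction j with
    | zero => exact le_refl _
    | succ m ih => exact (hmono m).trans ih
  have hule : ∀ j, ‖u j‖ ≤ 1 := by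
    intro j
    rw [hujabs j, div_le_one hD]
    exact hmono0 j
  have hsumu : Summable fun j => ‖u j‖ := by
    apply Summable.congr (hsum.div_const D)
    intro j
    exact (hujabs j).symm
  have hKeq : K = ∑' j, ‖u j‖ := by
    rw [hK]
    exact tsum_congr fun j => (hujabs j).symm
  have hK1 : 1 ≤ K := by
    rw [hKeq, ← hu0]
    exact Summable.le_tsum hsumu 0 fun j _ => norm_nonneg _
  by_contra hcon
  push_neg at hcon
  -- hcon : ∀ k, 1 ≤ k → (k:ℝ) ≤ 24*K → (∑' j, y j ^ k).re < 1/8 * D^k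
  set n : ℕ := ⌊24*K⌋₊ with hn
  -- summability of powers
  have hSk : ∀ k, 1 ≤ k → Summable (fun j => (u j)^k) := by
    intro k hk
    apply Summable.of_norm_bounded hsumu
    intro j
    rw [norm_pow]
    calc (‖u j‖)^k ≤ (‖u j‖)^1 :=
          pow_le_pow_of_le_one (norm_nonneg _) (hule j) hk
      _ = ‖u j‖ := pow_one _
  have hSkre : ∀ k, 1 ≤ k → Summable (fun j => ((u j)^k).re) := by
    intro k hk
    exact (Complex.hasSum_re (hSk k hk).hasSum).summable
  -- hypothesis in normalized form
  have hak : ∀ k, 1 ≤ k → k ≤ n → (∑' j, (u j)^k).re < 1/8 := by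
    intro k hk hkn
    have hkK : (k:ℝ) ≤ 24*K := by
      calc (k:ℝ) ≤ (n:ℝ) := by exact_mod_cast hkn
        _ ≤ 24*K := Nat.floor_le (by linarith)
    have hc := hcon k hk hkK
    have hyu : ∀ j, y j ^ k = ((D^k : ℝ) : ℂ) * (u j)^k := by
      intro j
      rw [hu]
      simp only []
      rw [div_pow, Complex.ofReal_pow]
      field_simp
    have htsum : (∑' j, y j ^ k) = ((D^k : ℝ) : ℂ) * ∑' j, (u j)^k := by
      rw [tsum_congr hyu, tsum_mul_left]
    rw [htsum, Complex.re_ofReal_mul] at hc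
    have hDk : (0:ℝ) < D^k := by positivity
    have h2 : D^k * (∑' j, (u j)^k).re < D^k * (1/8) := by linarith
    exact (mul_lt_mul_iff_right₀ hDk).mp h2
  -- the Fejér-weighted sum
  set Φ : ℂ → ℝ := fun v => ∑ i ∈ range n, (1 - (i+1 : ℝ)/(n+1)) * ((v^(i+1)).re) with hΦ
  have hL1 : ∀ v : ℂ, ‖v‖ ≤ 1 → -(1/2 : ℝ) ≤ Φ v := fun v hv =>
    phi_ge_neg_half n v hv
  -- per-atom lower bound
  have hatom : ∀ v : ℂ, ‖v‖ ≤ 1 →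
      -(4 * ‖v‖)
        ≤ Φ v + (1/2) * Φ ((u 0) * v) + (1/2) * Φ ((starRingEnd ℂ) (u 0) * v) := by
    intro v hv
    have habs1 : ‖(u 0) * v‖ = ‖v‖ := by
      rw [norm_mul, hu0, one_mul]
    have habs2 : ‖(starRingEnd ℂ) (u 0) * v‖ = ‖v‖ := by
      rw [norm_mul, Complex.norm_conj, hu0, one_mul]
    rcases le_or_gt (‖v‖) (1/4) with hsmall | hbig
    · have hlt : ‖v‖ < 1 := lt_of_le_of_lt hsmall (by norm_num)
      have hb0 : |Φ v| ≤ ‖v‖ / (1 - ‖v‖) := phi_abs_le_geom n v hlt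
      have hb1 : |Φ ((u 0) * v)| ≤ ‖v‖ / (1 - ‖v‖) := by
        have := phi_abs_le_geom n ((u 0) * v) (by rw [habs1]; exact hlt)
        rwa [habs1] at this
      have hb2 : |Φ ((starRingEnd ℂ) (u 0) * v)| ≤ ‖v‖ / (1 - ‖v‖) := by
        have := phi_abs_le_geom n ((starRingEnd ℂ) (u 0) * v) (by rw [habs2]; exact hlt)
        rwa [habs2] at this
      have hq : ‖v‖ / (1 - ‖v‖) ≤ (4/3) * ‖v‖ := by
        rw [div_le_iff₀ (by linarith)]
        nlinarith [norm_nonneg v]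
      have e0 := abs_le.mp hb0
      have e1 := abs_le.mp hb1
      have e2 := abs_le.mp hb2
      nlinarith [norm_nonneg v]
    · have h0 := hL1 v hv
      have h1 := hL1 ((u 0) * v) (by rw [habs1]; exact hv)
      have h2 := hL1 ((starRingEnd ℂ) (u 0) * v) (by rw [habs2]; exact hv)
      nlinarith [norm_nonneg v]
  -- notation
  set A : ℝ := Φ (u 0) with hA
  set W : ℝ := ∑ i ∈ range n, (1 - (i+1 : ℝ)/(n+1)) with hWdef
  have hW : W = n/2 := by
    rw [hWdef]
    rw [Finset.sum_sub_distrib, Finset.sum_const, Finset.card_range]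
    rw [← Finset.sum_div, sum_range_add_one_cast]
    field_simp
    ring
  have hAge : -(1/2 : ℝ) ≤ A := hL1 (u 0) (le_of_eq hu0)
  -- the kernel sum: E := ∑ i, c i * a (i+1)
  -- upper bound
  have hcnn : ∀ i ∈ range n, 0 ≤ (1 - (i+1 : ℝ)/(n+1)) * (1 + ((u 0)^(i+1)).re) := by
    intro i hi
    have hw0 : (0:ℝ) ≤ 1 - (i+1 : ℝ)/(n+1) := by
      have hlt' : i < n := Finset.mem_range.mp hi
      have hcast : (i:ℝ) ≤ (n:ℝ) := Nat.cast_le.mpr (le_of_lt hlt')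
      have hin : (i:ℝ) + 1 ≤ (n:ℝ) + 1 := by linarith
      rw [sub_nonneg, div_le_one (by positivity : (0:ℝ) < (n:ℝ)+1)]
      exact hin
    have habsp : ‖(u 0)^(i+1)‖ = 1 := by rw [norm_pow, hu0, one_pow]
    have hre1 := Complex.abs_re_le_norm ((u 0)^(i+1))
    rw [habsp] at hre1
    have hre2 := abs_le.mp hre1
    have h1re : (0:ℝ) ≤ 1 + ((u 0)^(i+1)).re := by linarith [hre2.1]
    exact mul_nonneg hw0 h1re
  have hupper : ∑ i ∈ range n,
        ((1 - (i+1 : ℝ)/(n+1)) * (1 + ((u 0)^(i+1)).re)) * (∑' j, (u j)^(i+1)).re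
      ≤ (1/8) * (W + A) := by
    have hsum_c : ∑ i ∈ range n, (1 - (i+1 : ℝ)/(n+1)) * (1 + ((u 0)^(i+1)).re) = W + A := by
      rw [hWdef, hA, hΦ, ← Finset.sum_add_distrib]
      refine Finset.sum_congr rfl fun i _ => ?_
      ring
    calc ∑ i ∈ range n,
          ((1 - (i+1 : ℝ)/(n+1)) * (1 + ((u 0)^(i+1)).re)) * (∑' j, (u j)^(i+1)).re
        ≤ ∑ i ∈ range n,
          ((1 - (i+1 : ℝ)/(n+1)) * (1 + ((u 0)^(i+1)).re)) * (1/8) := by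
          refine Finset.sum_le_sum fun i hi => ?_
          exact mul_le_mul_of_nonneg_left
            (le_of_lt (hak (i+1) (Nat.le_add_left 1 i) (Finset.mem_range.mp hi)))
            (hcnn i hi)
      _ = (1/8) * (W + A) := by rw [← Finset.sum_mul, hsum_c]; ring
  -- swap the sums
  have hswap : ∑ i ∈ range n,
        ((1 - (i+1 : ℝ)/(n+1)) * (1 + ((u 0)^(i+1)).re)) * (∑' j, (u j)^(i+1)).re
      = ∑' j, ∑ i ∈ range n,
        ((1 - (i+1 : ℝ)/(n+1)) * (1 + ((u 0)^(i+1)).re)) * ((u j)^(i+1)).re := by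
    rw [Summable.tsum_finsetSum (fun i _ => ((hSkre (i+1) (Nat.le_add_left 1 i)).mul_left _))]
    refine Finset.sum_congr rfl fun i _ => ?_
    rw [tsum_mul_left, Complex.re_tsum (hSk (i+1) (Nat.le_add_left 1 i))]
  -- rewrite the inner finite sum per atom
  have hG : ∀ j, ∑ i ∈ range n,
        ((1 - (i+1 : ℝ)/(n+1)) * (1 + ((u 0)^(i+1)).re)) * ((u j)^(i+1)).re
      = Φ (u j) + (1/2) * Φ ((u 0) * (u j)) + (1/2) * Φ ((starRingEnd ℂ) (u 0) * (u j)) := by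
    intro j
    rw [hΦ]
    simp only []
    rw [Finset.mul_sum, Finset.mul_sum, ← Finset.sum_add_distrib, ← Finset.sum_add_distrib]
    refine Finset.sum_congr rfl fun i _ => ?_
    have hp1 : ((u 0) * (u j))^(i+1) = (u 0)^(i+1) * (u j)^(i+1) := mul_pow _ _ _
    have hp2 : ((starRingEnd ℂ) (u 0) * (u j))^(i+1)
        = (starRingEnd ℂ) ((u 0)^(i+1)) * (u j)^(i+1) := by
      rw [mul_pow, map_pow]
    rw [hp1, hp2]
    have hrr := re_mul_re ((u 0)^(i+1)) ((u j)^(i+1))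
    linear_combination (1 - ((i:ℝ)+1)/((n:ℝ)+1)) * hrr
  -- summability of the atom sums
  have hGsum : Summable (fun j => ∑ i ∈ range n,
      ((1 - (i+1 : ℝ)/(n+1)) * (1 + ((u 0)^(i+1)).re)) * ((u j)^(i+1)).re) :=
    summable_sum fun i _ => ((hSkre (i+1) (Nat.le_add_left 1 i)).mul_left _)
  -- split off j = 0
  have hsplit0 : ∑' j, ∑ i ∈ range n,
        ((1 - (i+1 : ℝ)/(n+1)) * (1 + ((u 0)^(i+1)).re)) * ((u j)^(i+1)).re
      ≥ (A + W/2 - 1/4) + (-4) * (K - 1) := by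
    rw [Summable.tsum_eq_zero_add hGsum]
    -- the j = 0 term
    have hzero : ∑ i ∈ range n,
          ((1 - (i+1 : ℝ)/(n+1)) * (1 + ((u 0)^(i+1)).re)) * ((u 0)^(i+1)).re
        ≥ A + W/2 - 1/4 := by
      rw [hG 0]
      have hone : (starRingEnd ℂ) (u 0) * (u 0) = 1 := by
        rw [mul_comm, Complex.mul_conj, Complex.normSq_eq_norm_sq, hu0]
        norm_num
      have hPhione : Φ ((starRingEnd ℂ) (u 0) * (u 0)) = W := by
        rw [hone, hΦ, hWdef]
        refine Finset.sum_congr rfl fun i _ => ?_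
        rw [one_pow, Complex.one_re, mul_one]
      have habs00 : ‖(u 0) * (u 0)‖ = 1 := by
        rw [norm_mul, hu0, one_mul]
      have h00 := hL1 ((u 0) * (u 0)) (le_of_eq habs00)
      rw [hPhione, ← hA]
      linarith
    -- the tail
    have htail : ∑' j, ∑ i ∈ range n,
          ((1 - (i+1 : ℝ)/(n+1)) * (1 + ((u 0)^(i+1)).re)) * ((u (j+1))^(i+1)).re
        ≥ (-4) * (K - 1) := by
      have htailsum : Summable (fun j => ∑ i ∈ range n,
          ((1 - (i+1 : ℝ)/(n+1)) * (1 + ((u 0)^(i+1)).re)) * ((u (j+1))^(i+1)).re) :=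
        (summable_nat_add_iff 1).mpr hGsum
      have habs_tail : Summable (fun j => (-4) * ‖u (j+1)‖) :=
        ((summable_nat_add_iff 1).mpr hsumu).mul_left _
      have hle : ∀ j, (-4) * ‖u (j+1)‖
          ≤ ∑ i ∈ range n,
            ((1 - (i+1 : ℝ)/(n+1)) * (1 + ((u 0)^(i+1)).re)) * ((u (j+1))^(i+1)).re := by
        intro j
        rw [hG (j+1)]
        have := hatom (u (j+1)) (hule (j+1))
        linarith
      have := Summable.tsum_le_tsum hle habs_tail htailsum
      have htv : ∑' j, (-4) * ‖u (j+1)‖ = (-4) * (K - 1) := by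
        rw [tsum_mul_left]
        congr 1
        have := Summable.tsum_eq_zero_add hsumu
        rw [hKeq, this, hu0]
        ring
      linarith [htv ▸ this]
    linarith [hzero, htail]
  -- final contradiction
  have hnlow : 24*K < (n:ℝ) + 1 := Nat.lt_floor_add_one (24*K)
  have hfinal : (1/8) * (W + A) ≥ (A + W/2 - 1/4) + (-4) * (K - 1) := by
    calc (1/8) * (W + A) ≥ ∑ i ∈ range n,
          ((1 - (i+1 : ℝ)/(n+1)) * (1 + ((u 0)^(i+1)).re)) * (∑' j, (u j)^(i+1)).re :=
          hupper
      _ = ∑' j, ∑ i ∈ range n,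
          ((1 - (i+1 : ℝ)/(n+1)) * (1 + ((u 0)^(i+1)).re)) * ((u j)^(i+1)).re := hswap
      _ ≥ (A + W/2 - 1/4) + (-4) * (K - 1) := hsplit0
  rw [hW] at hfinal
  -- hfinal : (1/8)*(n/2 + A) ≥ A + n/4 - 1/4 - 4K + 4 ; with A ≥ -1/2, n > 24K - 1, K ≥ 1
  linarith [hfinal, hAge, hnlow, hK1]
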